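/- Let λ : A → B be a ring homomorphism between (possibly noncommutative) unital rings. Then λ is an epimorphism in the category of rings if and only if the restriction-of-scalars functor from right B-modules to right A-modules is fully faithful. -/

import Mathlib

open CategoryTheory

universe v

open MulOpposite in
/-- Auxiliary ring homomorphism `B → (End ℤ (M × N))ᵐᵒᵖ` twisted by an additive map `φ`. -/
private def gAux {B : Type} {M N : Type} [Ring B] [AddCommGroup M] [AddCommGroup N]
    [Module Bᵐᵒᵖ M] [Module Bᵐᵒᵖ N] (φ : M →+ N) :
    B →+* (Module.End ℤ (M × N))ᵐᵒᵖ where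
  toFun b := op <| AddMonoidHom.toIntLinearMap
    { toFun := fun p => (op b • p.1, op b • p.2 + φ (op b • p.1) - op b • φ p.1)
      map_zero' := by simp
      map_add' := by
        intro p q
        refine Prod.ext ?_ ?_
        · show op b • (p.1 + q.1) = (_ + _ : M × N).1
          simp only [Prod.mk_add_mk, smul_add]
        · show op b • (p.2 + q.2) + φ (op b • (p.1 + q.1)) - op b • φ (p.1 + q.1)
            = (_ + _ : M × N).2
          simp only [Prod.mk_add_mk, smul_add, map_add]
          abel }
  map_one' := by
    refine unop_injective (LinearMap.ext fun p => Prod.ext ?_ ?_) <;> simp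
  map_mul' b₁ b₂ := by
    refine unop_injective (LinearMap.ext fun p => Prod.ext ?_ ?_)
    · show (op (b₁ * b₂)) • p.1 = op b₂ • op b₁ • p.1
      rw [← mul_smul]
      rfl
    · show op (b₁ * b₂) • p.2 + φ (op (b₁ * b₂) • p.1) - op (b₁ * b₂) • φ p.1 =
        op b₂ • (op b₁ • p.2 + φ (op b₁ • p.1) - op b₁ • φ p.1) +
          φ (op b₂ • op b₁ • p.1) - op b₂ • φ (op b₁ • p.1)
      rw [smul_sub, smul_add, ← mul_smul, ← mul_smul, ← mul_smul]
      have : op b₂ * op b₁ = op (b₁ * b₂) := rfl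
      rw [this]
      abel
  map_zero' := by
    refine unop_injective (LinearMap.ext fun p => Prod.ext ?_ ?_) <;> simp
  map_add' b₁ b₂ := by
    refine unop_injective (LinearMap.ext fun p => Prod.ext ?_ ?_)
    · show op (b₁ + b₂) • p.1 = op b₁ • p.1 + op b₂ • p.1
      rw [MulOpposite.op_add, add_smul]
    · show op (b₁ + b₂) • p.2 + φ (op (b₁ + b₂) • p.1) - op (b₁ + b₂) • φ p.1 =
        (op b₁ • p.2 + φ (op b₁ • p.1) - op b₁ • φ p.1) +
          (op b₂ • p.2 + φ (op b₂ • p.1) - op b₂ • φ p.1)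
      simp only [MulOpposite.op_add, add_smul, map_add]
      abel

open MulOpposite in
/-- The key lemma in universe zero: if `lam` is an epimorphism of rings, then any
additive map between right `B`-modules which is semilinear over `A` is `B`-linear. -/
private lemma key {A B : Type} [Ring A] [Ring B] (lam : A →+* B)
    (h : ∀ (C : Type) [Ring C] (f g : B →+* C), f.comp lam = g.comp lam → f = g)
    {M N : Type} [AddCommGroup M] [AddCommGroup N] [Module Bᵐᵒᵖ M] [Module Bᵐᵒᵖ N]
    (φ : M →+ N)
    (hφ : ∀ (a : A) (m : M), φ (op (lam a) • m) = op (lam a) • φ m)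
    (b : B) (m : M) : φ (op b • m) = op b • φ m := by
  have heq := h _ (gAux (0 : M →+ N)) (gAux φ) ?_
  · have h2 := DFunLike.congr_fun (congrArg unop (RingHom.congr_fun heq b)) (m, 0)
    have h3 := congrArg Prod.snd h2
    simp only [gAux, RingHom.coe_mk, MonoidHom.coe_mk, OneHom.coe_mk, unop_op,
      AddMonoidHom.coe_toIntLinearMap, AddMonoidHom.coe_mk, ZeroHom.coe_mk,
      AddMonoidHom.zero_apply, smul_zero, add_zero, sub_zero, zero_add, zero_sub,
      sub_self] at h3
    rw [eq_comm, sub_eq_zero] at h3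
    exact h3
  · ext a
    refine unop_injective (LinearMap.ext fun p => Prod.ext rfl ?_)
    show op (lam a) • p.2 + (0 : M →+ N) (op (lam a) • p.1) - op (lam a) • (0 : M →+ N) p.1 =
      op (lam a) • p.2 + φ (op (lam a) • p.1) - op (lam a) • φ p.1
    rw [hφ]
    simp

/-- The span of a `Small` set is `Small`. -/
private lemma small_span {R : Type} [Semiring R] {M : Type v} [AddCommMonoid M] [Module R M]
    (s : Set M) [Small.{0} s] : Small.{0} (Submodule.span R s) := by
  let F : List (R × Shrink.{0} s) → M :=
    fun l => (l.map fun p => p.1 • ((equivShrink s).symm p.2 : M)).sum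
  have hFmem : ∀ l, F l ∈ Submodule.span R s := by
    intro l
    refine list_sum_mem fun x hx => ?_
    simp only [List.mem_map] at hx
    obtain ⟨p, -, rfl⟩ := hx
    exact Submodule.smul_mem _ _ (Submodule.subset_span ((equivShrink s).symm p.2).2)
  have hsub : ∀ x ∈ Submodule.span R s, ∃ l, F l = x := by
    intro x hx
    induction hx using Submodule.span_induction with
    | mem x hx =>
      refine ⟨[(1, equivShrink s ⟨x, hx⟩)], ?_⟩
      simp [F]
    | zero => exact ⟨[], rfl⟩
    | add x y _ _ hx hy =>
      obtain ⟨l₁, h₁⟩ := hx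
      obtain ⟨l₂, h₂⟩ := hy
      exact ⟨l₁ ++ l₂, by simp [F, ← h₁, ← h₂]⟩
    | smul r x _ hx =>
      obtain ⟨l, hl⟩ := hx
      have hmul : ∀ l' : List (R × Shrink.{0} s),
          F (l'.map fun p => (r * p.1, p.2)) = r • F l' := by
        intro l'
        induction l' with
        | nil => simp [F]
        | cons p t ih =>
          simp only [F, List.map_cons, List.sum_cons] at ih ⊢
          rw [ih, mul_smul, smul_add]
      exact ⟨l.map fun p => (r * p.1, p.2), by rw [hmul, hl]⟩
  refine small_of_surjective (f := fun l => (⟨F l, hFmem l⟩ : Submodule.span R s)) ?_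
  rintro ⟨x, hx⟩
  obtain ⟨l, hl⟩ := hsub x hx
  exact ⟨l, Subtype.ext hl⟩

open MulOpposite in
/-- The key lemma in an arbitrary universe, deduced from the universe-zero case
by passing to small submodules. -/
private lemma key' {A B : Type} [Ring A] [Ring B] (lam : A →+* B)
    (h : ∀ (C : Type) [Ring C] (f g : B →+* C), f.comp lam = g.comp lam → f = g)
    {M N : Type v} [AddCommGroup M] [AddCommGroup N] [Module Bᵐᵒᵖ M] [Module Bᵐᵒᵖ N]
    (φ : M →+ N)
    (hφ : ∀ (a : A) (m : M), φ (op (lam a) • m) = op (lam a) • φ m)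
    (b : B) (m : M) : φ (op b • m) = op b • φ m := by
  haveI : Small.{0} (({m} : Set M)) :=
    small_of_surjective (f := fun _ : PUnit => (⟨m, rfl⟩ : ({m} : Set M)))
      (by rintro ⟨x, rfl⟩; exact ⟨⟨⟩, rfl⟩)
  set M' : Submodule Bᵐᵒᵖ M := Submodule.span Bᵐᵒᵖ {m} with hM'
  haveI : Small.{0} M' := small_span _
  haveI : Small.{0} (φ '' (M' : Set M)) :=
    small_of_surjective (f := fun x : M' => (⟨φ x, Set.mem_image_of_mem φ x.2⟩ :
      (φ '' (M' : Set M)))) (by rintro ⟨y, x, hx, rfl⟩; exact ⟨⟨x, hx⟩, rfl⟩)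
  set N' : Submodule Bᵐᵒᵖ N := Submodule.span Bᵐᵒᵖ (φ '' (M' : Set M)) with hN'
  haveI : Small.{0} N' := small_span _
  have hmem : ∀ x : M', φ x ∈ N' := fun x =>
    Submodule.subset_span (Set.mem_image_of_mem φ x.2)
  let φ' : M' →+ N' :=
    { toFun := fun x => ⟨φ x, hmem x⟩
      map_zero' := Subtype.ext (by simp)
      map_add' := fun x y => Subtype.ext (by simp) }
  let eM := (Shrink.linearEquiv Bᵐᵒᵖ M' : Shrink.{0} M' ≃ₗ[Bᵐᵒᵖ] M').symm
  let eN := (Shrink.linearEquiv Bᵐᵒᵖ N' : Shrink.{0} N' ≃ₗ[Bᵐᵒᵖ] N').symm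
  let φ₀ : Shrink.{0} M' →+ Shrink.{0} N' :=
    (eN.toLinearMap.toAddMonoidHom.comp φ').comp eM.symm.toLinearMap.toAddMonoidHom
  have hφ'smul : ∀ (c : B) (x : M'), (∀ y : M, φ (op c • y) = op c • φ y) →
      φ' (op c • x) = op c • φ' x := by
    intro c x hc
    refine Subtype.ext ?_
    show φ ((op c • x : M') : M) = ((op c • φ' x : N') : N)
    rw [Submodule.coe_smul, Submodule.coe_smul, hc]
    rfl
  have hk : ∀ x : Shrink.{0} M', φ₀ (op b • x) = op b • φ₀ x := by
    intro x
    refine key lam h φ₀ (fun a y => ?_) b x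
    -- semilinearity of φ₀
    simp only [φ₀, AddMonoidHom.coe_comp, LinearMap.toAddMonoidHom_coe, Function.comp_apply,
      LinearEquiv.coe_coe, map_smul]
    rw [hφ'smul (lam a) (eM.symm y) (fun z => hφ a z)]
    exact map_smul eN.toLinearMap _ _
  have hx0 : m ∈ M' := Submodule.mem_span_singleton_self m
  have := hk (eM ⟨m, hx0⟩)
  simp only [φ₀, AddMonoidHom.coe_comp, LinearMap.toAddMonoidHom_coe, Function.comp_apply,
    LinearEquiv.coe_coe, map_smul, LinearEquiv.symm_apply_apply] at this
  rw [← map_smul eN] at this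
  have h2 := eN.injective this
  have h3 := congrArg (Subtype.val) h2
  simpa [φ'] using h3

/-- A ring homomorphism `λ : A → B` between (possibly noncommutative) unital rings is an
epimorphism in the category of rings if and only if restriction of scalars from right
`B`-modules (i.e. left `Bᵐᵒᵖ`-modules) to right `A`-modules is fully faithful. -/
theorem statement0 {A B : Type} [Ring A] [Ring B] (lam : A →+* B) :
    (∀ (C : Type) [Ring C] (f g : B →+* C), f.comp lam = g.comp lam → f = g) ↔
      ((ModuleCat.restrictScalars (RingHom.op lam)).Full ∧
        (ModuleCat.restrictScalars (RingHom.op lam)).Faithful) := by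
  constructor
  · intro h
    refine ⟨⟨fun {M N} φ => ?_⟩, inferInstance⟩
    have hk : ∀ (b : B) (m : ↑M),
        φ.hom.toAddMonoidHom (MulOpposite.op b • m) = MulOpposite.op b • φ.hom.toAddMonoidHom m :=
      key' lam h φ.hom.toAddMonoidHom (fun a m => φ.hom.map_smul (MulOpposite.op a) m)
    refine ⟨ModuleCat.ofHom ⟨⟨φ.hom, φ.hom.map_add⟩, fun r m => ?_⟩, ?_⟩
    · exact hk (MulOpposite.unop r) m
    · exact ModuleCat.hom_ext (LinearMap.ext fun x => rfl)
  · rintro ⟨hfull, -⟩ C _ f g hfg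
    let Cmod : ModuleCat Cᵐᵒᵖ := ModuleCat.of Cᵐᵒᵖ (ULift C)
    let Mf : ModuleCat Bᵐᵒᵖ := (ModuleCat.restrictScalars (RingHom.op f)).obj Cmod
    let Mg : ModuleCat Bᵐᵒᵖ := (ModuleCat.restrictScalars (RingHom.op g)).obj Cmod
    let φ : (ModuleCat.restrictScalars (RingHom.op lam)).obj Mf ⟶
        (ModuleCat.restrictScalars (RingHom.op lam)).obj Mg := ModuleCat.ofHom
        (X := ↑((ModuleCat.restrictScalars (RingHom.op lam)).obj Mf))
        (Y := ↑((ModuleCat.restrictScalars (RingHom.op lam)).obj Mg))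
      { toFun := fun c => c
        map_add' := fun _ _ => rfl
        map_smul' := fun r c => by
          have hc : ∀ x : ULift C,
              (ULift.up (x.down * f (lam (MulOpposite.unop r))) : ULift C)
                = ULift.up (x.down * g (lam (MulOpposite.unop r))) := by
            intro x
            have := RingHom.congr_fun hfg (MulOpposite.unop r)
            rw [RingHom.comp_apply, RingHom.comp_apply] at this
            rw [this]
          exact hc c }
    obtain ⟨ψ, hψ⟩ := hfull.map_surjective φ
    have hψ' : ∀ c : ↑((ModuleCat.restrictScalars (RingHom.op lam)).obj Mf),
        ψ.hom c = c := fun c => by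
          have := congrArg (fun k => ModuleCat.Hom.hom k c) hψ; exact this
    ext b
    let one : ↑Mf := ULift.up 1
    have hsm := ψ.hom.map_smul (MulOpposite.op b) one
    have e1 : (MulOpposite.op b • one : ↑Mf) = (ULift.up (f b) : ↑Mf) := by
      show (ULift.up ((1 : C) * f b) : ULift C) = ULift.up (f b)
      rw [one_mul]
    replace hsm := (hψ' (MulOpposite.op b • one)).symm.trans
      (hsm.trans (congrArg (fun x => MulOpposite.op b • x) (hψ' one)))
    have h2 : (ULift.up (f b) : ULift C) = ULift.up ((1 : C) * g b) := e1.symm.trans hsm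
    have h3 := congrArg ULift.down h2
    simpa using h3
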